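/- Let x_1,...,x_d be vectors in a Hilbert space H with positive definite Gram matrix. Fix j and S ⊆ [d]\{j}, and define T_j(S) = {T ⊆ [d]\{j} : P_T P_j = P_S P_j}. Then T_j(S) is convex as a subposet of the power set of [d]\{j}: if S_1, S_2 ∈ T_j(S) and S_1 ⊆ S' ⊆ S_2, then S' ∈ T_j(S). -/

import Mathlib

theorem stmt_7 {H : Type*} [NormedAddCommGroup H] [InnerProductSpace ℝ H] [CompleteSpace H]
    {d : ℕ} (x : Fin d → H)
    (hGram : (Matrix.of fun (i j : Fin d) => (inner ℝ (x i) (x j) : ℝ)).PosDef)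
    (P : Finset (Fin d) → H →L[ℝ] H)
    (hsa : ∀ A, IsSelfAdjoint (P A))
    (hidem : ∀ A, P A * P A = P A)
    (hrange : ∀ A : Finset (Fin d), LinearMap.range (P A : H →ₗ[ℝ] H) = Submodule.span ℝ (x '' ↑A))
    (j : Fin d) (S : Finset (Fin d)) (hS : j ∉ S)
    (S₁ S₂ S' : Finset (Fin d)) (h1 : j ∉ S₁) (h2 : j ∉ S₂) (h' : j ∉ S')
    (e1 : P S₁ * P {j} = P S * P {j}) (e2 : P S₂ * P {j} = P S * P {j})
    (hsub1 : S₁ ⊆ S') (hsub2 : S' ⊆ S₂) :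
    P S' * P {j} = P S * P {j} := by
  -- residual orthogonal to range
  have horth : ∀ (A : Finset (Fin d)) (y u : H), u ∈ LinearMap.range (P A : H →ₗ[ℝ] H) →
      (inner ℝ (y - P A y) u : ℝ) = 0 := by
    intro A y u hu
    obtain ⟨z, rfl⟩ := hu
    have hself := ContinuousLinearMap.isSelfAdjoint_iff'.mp (hsa A)
    have : (inner ℝ (y - P A y) ((P A) z) : ℝ) = inner ℝ ((P A) (y - P A y)) z := by
      rw [← ContinuousLinearMap.adjoint_inner_left, hself]
    rw [ContinuousLinearMap.coe_coe, this]
    have : (P A) (y - P A y) = 0 := by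
      have := congrArg (fun T : H →L[ℝ] H => T y) (hidem A)
      simp only [ContinuousLinearMap.mul_apply] at this
      simp [map_sub, this]
    simp [this]
  -- P{j} fixes x j
  have hfix : P {j} (x j) = x j := by
    have hmem : x j ∈ LinearMap.range (P {j} : H →ₗ[ℝ] H) := by
      rw [hrange]
      exact Submodule.subset_span ⟨j, by simp⟩
    obtain ⟨z, hz⟩ := hmem
    have := congrArg (fun T : H →L[ℝ] H => T z) (hidem {j})
    simp only [ContinuousLinearMap.mul_apply] at this
    rw [ContinuousLinearMap.coe_coe] at hz
    rw [← hz, this, hz]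
  have hx1 : P S₁ (x j) = P S (x j) := by
    have := congrArg (fun T : H →L[ℝ] H => T (x j)) e1
    simpa [ContinuousLinearMap.mul_apply, hfix] using this
  have hx2 : P S₂ (x j) = P S (x j) := by
    have := congrArg (fun T : H →L[ℝ] H => T (x j)) e2
    simpa [ContinuousLinearMap.mul_apply, hfix] using this
  -- span monotonicity
  have hmono : ∀ {A B : Finset (Fin d)}, A ⊆ B →
      LinearMap.range (P A : H →ₗ[ℝ] H) ≤ LinearMap.range (P B : H →ₗ[ℝ] H) := by
    intro A B hAB
    rw [hrange, hrange]
    exact Submodule.span_mono (Set.image_mono (by exact_mod_cast hAB))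
  -- key: P S' (x j) = P S (x j)
  have hkey : P S' (x j) = P S (x j) := by
    have hveq : P S₁ (x j) = P S₂ (x j) := hx1.trans hx2.symm
    have hvmem : P S₁ (x j) ∈ LinearMap.range (P S' : H →ₗ[ℝ] H) := hmono hsub1 ⟨x j, rfl⟩
    have hperp : ∀ u ∈ LinearMap.range (P S' : H →ₗ[ℝ] H), (inner ℝ (x j - P S₁ (x j)) u : ℝ) = 0 := by
      intro u hu
      rw [hveq]
      exact horth S₂ (x j) u (hmono hsub2 hu)
    have hd : P S' (x j) - P S₁ (x j) ∈ LinearMap.range (P S' : H →ₗ[ℝ] H) :=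
      Submodule.sub_mem _ ⟨x j, rfl⟩ hvmem
    have hzero : (inner ℝ (P S' (x j) - P S₁ (x j)) (P S' (x j) - P S₁ (x j)) : ℝ) = 0 := by
      have h1' := horth S' (x j) _ hd
      have h2' := hperp _ hd
      have habel : ((x j - P S₁ (x j)) - (x j - P S' (x j))) = P S' (x j) - P S₁ (x j) := by abel
      calc (inner ℝ (P S' (x j) - P S₁ (x j)) (P S' (x j) - P S₁ (x j)) : ℝ)
          = inner ℝ ((x j - P S₁ (x j)) - (x j - P S' (x j))) (P S' (x j) - P S₁ (x j)) := by
            rw [habel]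
        _ = (inner ℝ (x j - P S₁ (x j)) (P S' (x j) - P S₁ (x j)) : ℝ)
            - inner ℝ (x j - P S' (x j)) (P S' (x j) - P S₁ (x j)) := by rw [inner_sub_left]
        _ = 0 := by rw [h1', h2', sub_zero]
    have heq : P S' (x j) = P S₁ (x j) := sub_eq_zero.mp (inner_self_eq_zero.mp hzero)
    rw [heq, hx1]
  -- conclude
  ext y
  simp only [ContinuousLinearMap.mul_apply]
  have hy : P {j} y ∈ Submodule.span ℝ (x '' ({j} : Finset (Fin d))) := by
    rw [← hrange]; exact ⟨y, rfl⟩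
  have : (x '' ({j} : Finset (Fin d)) : Set H) = {x j} := by simp
  rw [this] at hy
  obtain ⟨c, hc⟩ := Submodule.mem_span_singleton.mp hy
  rw [← hc, map_smul, map_smul, hkey]
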